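/- Let S ⊂ ℝ³ be a pseudo-spacelike entire graph over the spacelike plane {x₃ = 0} (any two distinct points of S differ by a Q-spacelike vector, Q(v) = v₁² + v₂² − v₃²). Suppose S is disjoint from the lightlike line ℓ = {(0, s, s) : s ∈ ℝ} and S lies below ℓ in the sense that for each s, the point of S over (0,s) has third coordinate less than s. Then S is disjoint from the lightlike plane {x₂ = x₃}, i.e., S ⊂ {(x₁,x₂,x₃) : x₂ > x₃} ∪ {(x₁,x₂,x₃) : x₂ < x₃}, and in fact S ⊂ {x₃ < x₂}. -/

import Mathlib

/-- Minkowski quadratic form on ℝ³. -/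
noncomputable def QL (p : ℝ × ℝ × ℝ) : ℝ := p.1 ^ 2 + p.2.1 ^ 2 - p.2.2 ^ 2

/-- A pseudo-spacelike entire graph `S = graph f` disjoint from the
lightlike line `ℓ = {(0,s,s)}` and lying below it is disjoint from the lightlike
plane `{x₂ = x₃}`; in fact `S ⊆ {x₃ < x₂}`. -/
theorem pseudoSpacelike_graph_below_lightlike_line (f : ℝ × ℝ → ℝ)
    (hps : ∀ x y : ℝ × ℝ, x ≠ y →
      0 < (x.1 - y.1) ^ 2 + (x.2 - y.2) ^ 2 - (f x - f y) ^ 2)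
    (hdisj : ∀ s : ℝ, f (0, s) ≠ s)
    (hbelow : ∀ s : ℝ, f (0, s) < s) :
    (∀ x : ℝ × ℝ, f x ≠ x.2) ∧ (∀ x : ℝ × ℝ, f x < x.2) := by
  have hA : ∀ x : ℝ × ℝ, f x ≤ x.2 := by
    rintro ⟨a, b⟩
    by_contra h
    push_neg at h
    simp only at h
    set d : ℝ := f (a, b) - b with hd
    have hd0 : 0 < d := by linarith
    by_cases ha : a = 0
    · subst ha
      have := hbelow b
      linarith
    · set s : ℝ := b - (a ^ 2 + 2 * d) / (2 * d) with hs
      have hxy : ((a, b) : ℝ × ℝ) ≠ (0, s) := by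
        simp [Prod.ext_iff, ha]
      have h1 := hps (a, b) (0, s) hxy
      simp only at h1
      have h2 : f (0, s) < s := hbelow s
      have hc : 2 * d * (b - s) = a ^ 2 + 2 * d := by
        rw [hs]; field_simp; ring
      have hbs : 0 < b - s := by nlinarith [sq_nonneg a]
      have h5 : 0 < f (a, b) - f (0, s) - (d + (b - s)) := by
        simp only [hd]; linarith
      have h6 : 0 < f (a, b) - f (0, s) + (d + (b - s)) := by
        simp only [hd]; linarith
      nlinarith [mul_pos h5 h6, sq_nonneg d]
  have hB : ∀ x : ℝ × ℝ, f x < x.2 := by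
    rintro ⟨a, b⟩
    rcases lt_or_eq_of_le (hA (a, b)) with h | h
    · exact h
    · exfalso
      have hxy : ((a, b) : ℝ × ℝ) ≠ (a, b - 1) := by
        simp only [ne_eq, Prod.mk.injEq, not_and]
        intro _; linarith
      have h1 := hps (a, b) (a, b - 1) hxy
      simp only at h1
      have h2 : f (a, b - 1) ≤ b - 1 := hA (a, b - 1)
      nlinarith
  exact ⟨fun x => ne_of_lt (hB x), hB⟩
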